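/- Let G be a group of nilpotency class at most 2, i.e., the commutator subgroup [G,G] is contained in the center of G. Let k ≥ 1, let z : Fin k → G, let N ∈ ℕ, and let γ : Fin N → Fin k. For i, j ∈ Fin k set w_i = |{ℓ : γ(ℓ) = i}| and C_{i,j} = |{(m, ℓ) : m < ℓ, γ(ℓ) = i, γ(m) = j}|. Then z(γ(1)) · z(γ(2)) ⋯ z(γ(N)) = (∏_{i=1}^k z(i)^{w_i}) · ∏_{i < j} ⁅z(i)⁻¹, z(j)⁻¹⁆^{−C_{i,j}}, where the first product is taken in increasing order of i, ⁅x, y⁆ = x y x⁻¹ y⁻¹ denotes the commutator, and the second product is independent of the order of its factors since all commutators are central. -/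

import Mathlib

open scoped commutatorElement

section
variable {G : Type*} [Group G] (hG : ∀ x y : G, ⁅x, y⁆ ∈ Subgroup.center G)
include hG

lemma my_central (a b g : G) : g * ⁅a, b⁆ = ⁅a, b⁆ * g :=
  Subgroup.mem_center_iff.1 (hG a b) g

lemma my_swap (a x : G) : a * x = x * a * ⁅a, x⁆ := by
  have h := my_central hG a x (x * a)
  rw [h, commutatorElement_def]; group

lemma my_comm_mul (a x y : G) : ⁅a, x * y⁆ = ⁅a, x⁆ * ⁅a, y⁆ := by
  have h1 : ⁅a, x * y⁆ = (a * x * a⁻¹) * (⁅a, y⁆ * x⁻¹) := by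
    rw [commutatorElement_def, commutatorElement_def]; group
  rw [h1, ← my_central hG a y x⁻¹, commutatorElement_def a x, commutatorElement_def a y]
  group

lemma my_comm_pow (a x : G) (n : ℕ) : ⁅a, x ^ n⁆ = ⁅a, x⁆ ^ n := by
  induction n with
  | zero => simp
  | succ n ih => rw [pow_succ, my_comm_mul hG, ih, pow_succ]

lemma my_inv_inv (a b : G) : ⁅a⁻¹, b⁻¹⁆ = ⁅a, b⁆ := by
  have h1 : ⁅a⁻¹, b⁻¹⁆ = a⁻¹ * b⁻¹ * (⁅a, b⁆ * (b * a)) := by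
    rw [commutatorElement_def, commutatorElement_def]; group
  rw [h1, ← mul_assoc, ← mul_assoc, my_central hG]
  group

end

section
variable {G : Type*} [Group G] {α : Type*}

lemma my_prod_map_mul_central (f g : α → G) (hg : ∀ x : α, ∀ u : G, u * g x = g x * u) :
    ∀ l : List α, (l.map fun x => f x * g x).prod = (l.map f).prod * (l.map g).prod := by
  intro l
  induction l with
  | nil => simp
  | cons b t ih =>
    simp only [List.map_cons, List.prod_cons, ih]
    rw [mul_assoc (f b) (g b), ← mul_assoc (g b), ← hg b ((List.map f t).prod),
      mul_assoc ((List.map f t).prod), ← mul_assoc (f b)]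

lemma my_prod_map_eq_one (f : α → G) (l : List α) (h : ∀ x ∈ l, f x = 1) :
    (l.map f).prod = 1 := by
  induction l with
  | nil => simp
  | cons b t ih => simp [h b (by simp), ih fun x hx => h x (by simp [hx])]

lemma my_prod_map_filter (f : α → G) (p : α → Bool) (l : List α)
    (h : ∀ x ∈ l, p x = false → f x = 1) :
    (l.map f).prod = ((l.filter p).map f).prod := by
  induction l with
  | nil => simp
  | cons b t ih =>
    by_cases hb : p b
    · simp [List.filter_cons, hb, ih fun x hx hpx => h x (by simp [hx]) hpx]
    · simp only [Bool.not_eq_true] at hb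
      simp [List.filter_cons, hb, h b (by simp) hb,
        ih fun x hx hpx => h x (by simp [hx]) hpx]

lemma my_prod_map_single (f : α → G) (t : α) :
    ∀ l : List α, l.Nodup → t ∈ l → (∀ x ∈ l, x ≠ t → f x = 1) →
      (l.map f).prod = f t := by
  intro l
  induction l with
  | nil => simp
  | cons b s ih =>
    intro hnd hmem hone
    rcases List.mem_cons.1 hmem with rfl | hs
    · simp only [List.map_cons, List.prod_cons]
      rw [my_prod_map_eq_one f s fun x hx =>
        hone x (by simp [hx]) (fun h => (List.nodup_cons.1 hnd).1 (h ▸ hx)), mul_one]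
    · simp only [List.map_cons, List.prod_cons]
      rw [hone b (by simp) (fun h => (List.nodup_cons.1 hnd).1 (h ▸ hs)), one_mul]
      exact ih (List.nodup_cons.1 hnd).2 hs fun x hx hxt => hone x (by simp [hx]) hxt

end

section
variable {G : Type*} [Group G] {k : ℕ}

lemma my_insert_aux (hG : ∀ x y : G, ⁅x, y⁆ ∈ Subgroup.center G)
    (z : Fin k → G) (a : Fin k) (w : Fin k → ℕ) :
    ∀ l : List (Fin k), l.Pairwise (· < ·) → a ∈ l →
      z a * (l.map fun i => z i ^ w i).prod
        = (l.map fun i => z i ^ (w i + if i = a then 1 else 0)).prod *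
          ((l.filter fun i => i < a).map fun i => ⁅z a, z i⁆ ^ w i).prod := by
  intro l
  induction l with
  | nil => simp
  | cons b t ih =>
    intro hp hm
    have hpt := List.pairwise_cons.1 hp
    rcases List.mem_cons.1 hm with rfl | hmt
    · have ht1 : ∀ x ∈ t, x ≠ a := fun x hx h => absurd (h ▸ hpt.1 x hx) (lt_irrefl a)
      have hmapeq : (t.map fun i => z i ^ (w i + if i = a then 1 else 0))
          = t.map fun i => z i ^ w i :=
        List.map_congr_left fun x hx => by rw [if_neg (ht1 x hx), add_zero]
      have hfil : ((a :: t).filter fun i => i < a) = [] := by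
        rw [List.filter_cons, if_neg (by simp)]
        exact List.filter_eq_nil_iff.2 fun x hx => by
          simp [not_lt.2 (le_of_lt (hpt.1 x hx))]
      rw [hfil, List.map_cons, List.prod_cons, List.map_cons, List.prod_cons, hmapeq,
        if_pos rfl, List.map_nil, List.prod_nil, mul_one, ← mul_assoc, ← pow_succ']
    · have hba : b < a := hpt.1 a hmt
      have hc : ∀ u : G, u * ⁅z a, z b⁆ ^ w b = ⁅z a, z b⁆ ^ w b * u := fun u =>
        Subgroup.mem_center_iff.1 (Subgroup.pow_mem _ (hG (z a) (z b)) (w b)) u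
      have hfil : ((b :: t).filter fun i => i < a) = b :: (t.filter fun i => i < a) := by
        rw [List.filter_cons, if_pos (by simpa using hba)]
      rw [hfil, List.map_cons, List.prod_cons, List.map_cons, List.prod_cons,
        List.map_cons, List.prod_cons, if_neg (ne_of_lt hba), add_zero]
      rw [← mul_assoc, my_swap hG (z a) (z b ^ w b), my_comm_pow hG]
      rw [← hc, mul_assoc (z b ^ w b * z a), ← hc, ← mul_assoc,
        mul_assoc (z b ^ w b) (z a), ih hpt.2 hmt, ← mul_assoc, mul_assoc]
end

def myW {k N : ℕ} (γ : Fin N → Fin k) (i : Fin k) : ℕ :=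
  ∑ ℓ, if γ ℓ = i then 1 else 0

def myC {k N : ℕ} (γ : Fin N → Fin k) (i j : Fin k) : ℕ :=
  ∑ m, ∑ ℓ, if (m < ℓ ∧ γ ℓ = i ∧ γ m = j) then 1 else 0

lemma myW_succ {k N : ℕ} (γ : Fin (N+1) → Fin k) (i : Fin k) :
    myW γ i = (if γ 0 = i then 1 else 0) + myW (γ ∘ Fin.succ) i := by
  rw [myW, Fin.sum_univ_succ]; rfl

lemma myC_succ {k N : ℕ} (γ : Fin (N+1) → Fin k) (i j : Fin k) :
    myC γ i j = (if γ 0 = j then myW (γ ∘ Fin.succ) i else 0) + myC (γ ∘ Fin.succ) i j := by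
  unfold myC
  rw [Fin.sum_univ_succ]
  congr 1
  · rw [Fin.sum_univ_succ]
    by_cases h : γ 0 = j
    · simp [h, Fin.succ_pos, myW, Function.comp]
    · simp [h]
  · apply Finset.sum_congr rfl
    intro m _
    rw [Fin.sum_univ_succ]
    simp [Fin.succ_lt_succ_iff, Function.comp]

lemma my_main {G : Type*} [Group G] (hG : ∀ x y : G, ⁅x, y⁆ ∈ Subgroup.center G)
    {k : ℕ} (z : Fin k → G) :
    ∀ (N : ℕ) (γ : Fin N → Fin k),
      ((List.finRange N).map fun ℓ => z (γ ℓ)).prod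
        = ((List.finRange k).map fun i => z i ^ myW γ i).prod *
          ((List.finRange k).map fun i =>
            (((List.finRange k).filter fun j => i < j).map fun j =>
              ⁅(z i)⁻¹, (z j)⁻¹⁆ ^ (-(myC γ i j : ℤ))).prod).prod := by
  intro N
  induction N with
  | zero =>
    intro γ
    have h1 : ∀ i : Fin k, myW γ i = 0 := fun i => by simp [myW]
    have h2 : ∀ i j : Fin k, myC γ i j = 0 := fun i j => by simp [myC]
    simp [h1, h2]
  | succ N ih =>
    intro γ
    set γ' : Fin N → Fin k := γ ∘ Fin.succ with hγ'
    set a : Fin k := γ 0 with ha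
    -- abbreviations
    set A' : G := ((List.finRange k).map fun i => z i ^ myW γ' i).prod with hA'
    set B' : G := ((List.finRange k).map fun i =>
        (((List.finRange k).filter fun j => i < j).map fun j =>
          ⁅(z i)⁻¹, (z j)⁻¹⁆ ^ (-(myC γ' i j : ℤ))).prod).prod with hB'
    have hword : ((List.finRange (N+1)).map fun ℓ => z (γ ℓ)).prod = z a * (A' * B') := by
      rw [List.finRange_succ, List.map_cons, List.prod_cons, List.map_map]
      rw [show ((fun ℓ => z (γ ℓ)) ∘ Fin.succ) = (fun ℓ => z (γ' ℓ)) from rfl]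
      rw [ih γ']
    rw [hword]
    -- centrality of B'
    have hBmem : B' ∈ Subgroup.center G := by
      rw [hB']
      apply Subgroup.list_prod_mem
      intro x hx
      obtain ⟨i, _, rfl⟩ := List.mem_map.1 hx
      apply Subgroup.list_prod_mem
      intro y hy
      obtain ⟨j, _, rfl⟩ := List.mem_map.1 hy
      exact Subgroup.zpow_mem _ (hG _ _) _
    have hBc : ∀ u : G, u * B' = B' * u := Subgroup.mem_center_iff.1 hBmem
    -- the correction term
    set D : G := (((List.finRange k).filter fun i => i < a).map
        fun i => ⁅z a, z i⁆ ^ myW γ' i).prod with hD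
    have hDmem : D ∈ Subgroup.center G := by
      rw [hD]
      apply Subgroup.list_prod_mem
      intro x hx
      obtain ⟨i, _, rfl⟩ := List.mem_map.1 hx
      exact Subgroup.pow_mem _ (hG _ _) _
    have hDc : ∀ u : G, u * D = D * u := Subgroup.mem_center_iff.1 hDmem
    -- step 1: insert z a into A'
    have hins : z a * A' = ((List.finRange k).map fun i => z i ^ myW γ i).prod * D := by
      rw [hA', my_insert_aux hG z a (fun i => myW γ' i) (List.finRange k)
        (List.pairwise_lt_finRange k) (List.mem_finRange a), hD]
      have heq : (List.map (fun i => z i ^ (myW γ' i + if i = a then 1 else 0))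
          (List.finRange k)) = List.map (fun i => z i ^ myW γ i) (List.finRange k) := by
        apply List.map_congr_left
        intro i _
        rw [myW_succ]
        congr 1
        by_cases h : i = a
        · subst h
          rw [hγ', add_comm]
        · rw [if_neg h, if_neg (fun hh => h hh.symm), add_zero, zero_add, hγ']
      rw [heq]
    -- split B (myC γ) = BD * B'
    set BD : G := ((List.finRange k).map fun i =>
        (((List.finRange k).filter fun j => i < j).map fun j =>
          ⁅(z i)⁻¹, (z j)⁻¹⁆ ^ (-((if a = j then myW γ' i else 0 : ℕ) : ℤ))).prod).prod with hBD
    have hgcentral : ∀ (i : Fin k) (u : G),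
        u * (((List.finRange k).filter fun j => i < j).map fun j =>
          ⁅(z i)⁻¹, (z j)⁻¹⁆ ^ (-(myC γ' i j : ℤ))).prod
        = (((List.finRange k).filter fun j => i < j).map fun j =>
          ⁅(z i)⁻¹, (z j)⁻¹⁆ ^ (-(myC γ' i j : ℤ))).prod * u := by
      intro i u
      refine Subgroup.mem_center_iff.1 (Subgroup.list_prod_mem _ ?_) u
      intro y hy
      obtain ⟨j, _, rfl⟩ := List.mem_map.1 hy
      exact Subgroup.zpow_mem _ (hG _ _) _
    have inner_eq : ∀ i : Fin k,
        (((List.finRange k).filter fun j => i < j).map fun j =>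
            ⁅(z i)⁻¹, (z j)⁻¹⁆ ^ (-(myC γ i j : ℤ))).prod
        = (((List.finRange k).filter fun j => i < j).map fun j =>
            ⁅(z i)⁻¹, (z j)⁻¹⁆ ^ (-((if a = j then myW γ' i else 0 : ℕ) : ℤ))).prod *
          (((List.finRange k).filter fun j => i < j).map fun j =>
            ⁅(z i)⁻¹, (z j)⁻¹⁆ ^ (-(myC γ' i j : ℤ))).prod := by
      intro i
      rw [← my_prod_map_mul_central _ _
        (fun j u => Subgroup.mem_center_iff.1 (Subgroup.zpow_mem _ (hG _ _) _) u)]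
      have : ∀ j ∈ ((List.finRange k).filter fun j => i < j),
          ⁅(z i)⁻¹, (z j)⁻¹⁆ ^ (-(myC γ i j : ℤ))
          = ⁅(z i)⁻¹, (z j)⁻¹⁆ ^ (-((if a = j then myW γ' i else 0 : ℕ) : ℤ)) *
            ⁅(z i)⁻¹, (z j)⁻¹⁆ ^ (-(myC γ' i j : ℤ)) := by
        intro j _
        rw [← zpow_add, ← neg_add, myC_succ γ i j, ← ha, ← hγ', Nat.cast_add]
      rw [List.map_congr_left this]
    have hBsplit : ((List.finRange k).map fun i =>
        (((List.finRange k).filter fun j => i < j).map fun j =>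
          ⁅(z i)⁻¹, (z j)⁻¹⁆ ^ (-(myC γ i j : ℤ))).prod).prod = BD * B' := by
      rw [hBD, hB', ← my_prod_map_mul_central _ _ hgcentral]
      rw [List.map_congr_left (fun i (_ : i ∈ List.finRange k) => inner_eq i)]
    -- BD = D
    have hBD_eq : BD = D := by
      rw [hBD, hD]
      rw [my_prod_map_filter _ (fun i => decide (i < a)) _ ?hone]
      case hone =>
        intro i _ hia
        apply my_prod_map_eq_one
        intro j hj
        have hij : i < j := by simpa using (List.mem_filter.1 hj).2
        have : ¬ a = j := fun hh => by
          simp only [decide_eq_false_iff_not, not_lt] at hia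
          exact absurd (lt_of_lt_of_le hij (hh ▸ hia)) (lt_irrefl i)
        rw [if_neg this]
        simp
      have hmc : ∀ i ∈ (List.finRange k).filter (fun i => decide (i < a)),
          (((List.finRange k).filter fun j => i < j).map fun j =>
            ⁅(z i)⁻¹, (z j)⁻¹⁆ ^ (-((if a = j then myW γ' i else 0 : ℕ) : ℤ))).prod
          = ⁅z a, z i⁆ ^ myW γ' i := by
        intro i hi
        have hia : i < a := by simpa using (List.mem_filter.1 hi).2
        rw [my_prod_map_single _ a _
          (List.Nodup.filter _ (List.nodup_finRange k))
          (List.mem_filter.2 ⟨List.mem_finRange a, by simpa using hia⟩)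
          (fun x _ hxa => by rw [if_neg (fun hh => hxa hh.symm)]; simp)]
        rw [if_pos rfl, my_inv_inv hG]
        rw [zpow_neg, zpow_natCast, ← inv_pow, commutatorElement_inv]
      rw [List.map_congr_left hmc]
    -- assemble
    rw [hBsplit, hBD_eq, ← mul_assoc, hins, mul_assoc]


/-- in a group of nilpotency class at most 2 (all commutators central), an
ordered word `z(γ(1)) ⋯ z(γ(N))` equals `(∏_i z(i)^{w_i}) · ∏_{i<j} ⁅z(i)⁻¹, z(j)⁻¹⁆^{−C_{i,j}}`,
where `w_i` counts occurrences of `i` in `γ` and `C_{i,j}` counts pairs `m < ℓ` with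
`γ(ℓ) = i`, `γ(m) = j`. -/
theorem stmt_13 {G : Type*} [Group G]
    (hG : ∀ x y : G, ⁅x, y⁆ ∈ Subgroup.center G)
    (k : ℕ) (hk : 1 ≤ k) (z : Fin k → G) (N : ℕ) (γ : Fin N → Fin k) :
    ((List.finRange N).map (fun ℓ => z (γ ℓ))).prod
      = ((List.finRange k).map (fun i =>
            z i ^ (Finset.univ.filter (fun ℓ : Fin N => γ ℓ = i)).card)).prod
        * ((List.finRange k).map (fun i =>
            (((List.finRange k).filter (fun j => i < j)).map (fun j =>
              ⁅(z i)⁻¹, (z j)⁻¹⁆ ^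
                (-((Finset.univ.filter (fun q : Fin N × Fin N =>
                      q.1 < q.2 ∧ γ q.2 = i ∧ γ q.1 = j)).card : ℤ)))).prod)).prod := by
  have hW : ∀ i, (Finset.univ.filter (fun ℓ : Fin N => γ ℓ = i)).card = myW γ i :=
    fun i => Finset.card_filter _ _
  have hC : ∀ i j, (Finset.univ.filter (fun q : Fin N × Fin N =>
      q.1 < q.2 ∧ γ q.2 = i ∧ γ q.1 = j)).card = myC γ i j := by
    intro i j
    rw [Finset.card_filter, myC, Fintype.sum_prod_type]
  simp only [hW, hC]
  exact my_main hG z N γ
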